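/- There exists a constant c₀ > 0 such that for all matrices A, B ∈ K one has det(A − B) ≥ c₀ |A − B|⁴, where |·| denotes the Frobenius norm. In particular, K contains no rank-one connections: if A, B ∈ K and A ≠ B then Rank(A − B) ≠ 1. -/

import Mathlib

open MeasureTheory Complex Filter Metric Set
open scoped Topology ENNReal NNReal

noncomputable section

def dotC (a b : ℂ) : ℝ := a.re * b.re + a.im * b.im

def pc1 (f : ℂ → ℝ) (x : ℂ) : ℝ := fderiv ℝ f x 1
def pc2 (f : ℂ → ℝ) (x : ℂ) : ℝ := fderiv ℝ f x Complex.I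

def gradC (f : ℂ → ℝ) (x : ℂ) : ℂ := ⟨pc1 f x, pc2 f x⟩

def SigmaA (u : ℂ → ℝ) (x : ℂ) : ℂ :=
  ⟨pc1 u x * (1 - (pc2 u x) ^ 2 - (pc1 u x) ^ 2 / 3),
   -(pc2 u x) * (1 - (pc1 u x) ^ 2 - (pc2 u x) ^ 2 / 3)⟩

def SigmaB (u : ℂ → ℝ) (x : ℂ) : ℂ :=
  ⟨pc2 u x * (1 - 2 * (pc2 u x) ^ 2 / 3),
   pc1 u x * (1 - 2 * (pc1 u x) ^ 2 / 3)⟩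

def IsTestOn (Ω : Set ℂ) (ζ : ℂ → ℝ) : Prop :=
  ContDiff ℝ (⊤ : ℕ∞) ζ ∧ HasCompactSupport ζ ∧ tsupport ζ ⊆ Ω

def MemE (Ω : Set ℂ) (u : ℂ → ℝ) : Prop :=
  (∃ L : ℝ≥0, LipschitzOnWith L u Ω) ∧
  (∀ᵐ x ∂(volume.restrict Ω), DifferentiableAt ℝ u x ∧ ‖gradC u x‖ = 1) ∧
  (∀ ζ : ℂ → ℝ, IsTestOn Ω ζ → ∫ x in Ω, dotC (SigmaA u x) (gradC ζ x) = 0) ∧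
  (∀ ζ : ℂ → ℝ, IsTestOn Ω ζ → ∫ x in Ω, dotC (SigmaB u x) (gradC ζ x) = 0)

def IsBSCDomain (Ω : Set ℂ) : Prop :=
  IsOpen Ω ∧ IsConnected Ω ∧ Bornology.IsBounded Ω ∧ SimplyConnectedSpace Ω

def Cpt (Ω' Ω : Set ℂ) : Prop := IsCompact (closure Ω') ∧ closure Ω' ⊆ Ω

def wz (v : ℂ → ℂ) (z : ℂ) : ℂ :=
  (2⁻¹ : ℂ) * (fderiv ℝ v z 1 - Complex.I * fderiv ℝ v z Complex.I)
def wzbar (v : ℂ → ℂ) (z : ℂ) : ℂ :=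
  (2⁻¹ : ℂ) * (fderiv ℝ v z 1 + Complex.I * fderiv ℝ v z Complex.I)

def BeltramiAE (Ω : Set ℂ) (v : ℂ → ℂ) : Prop :=
  ∀ᵐ z ∂(volume.restrict Ω), DifferentiableAt ℝ v z ∧
    wzbar v z = (4/3 : ℂ) * (wz v z) ^ 3 ∧ ‖wz v z‖ = 1/2

def mollify (ρ : ℂ → ℝ) (ε : ℝ) (x : ℂ) : ℝ := (ε ^ 2)⁻¹ * ρ (ε⁻¹ • x)

def smoothR (ρ : ℂ → ℝ) (ε : ℝ) (u : ℂ → ℝ) : ℂ → ℝ :=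
  MeasureTheory.convolution (mollify ρ ε) u (ContinuousLinearMap.lsmul ℝ ℝ) volume

def smoothC (ρ : ℂ → ℝ) (ε : ℝ) (w : ℂ → ℂ) : ℂ → ℂ :=
  MeasureTheory.convolution (mollify ρ ε) w (ContinuousLinearMap.lsmul ℝ ℝ) volume

def IsMollifier (ρ : ℂ → ℝ) : Prop :=
  ContDiff ℝ (⊤ : ℕ∞) ρ ∧ (∀ x, 0 ≤ ρ x) ∧ tsupport ρ ⊆ Metric.closedBall 0 1 ∧ (∫ x, ρ x) = 1

def dir : Fin 2 → ℂ := ![1, Complex.I]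
def pd (i : Fin 2) (f : ℂ → ℝ) (x : ℂ) : ℝ := fderiv ℝ f x (dir i)
def comp2 (i : Fin 2) (z : ℂ) : ℝ := ![z.re, z.im] i

def wfun (u : ℂ → ℝ) (x : ℂ) : ℂ := Complex.I * gradC u x

def sep (s t : Set ℂ) : ℝ := ⨅ x ∈ s, Metric.infDist x t


/-- The matrix `M(θ)`. -/
def Mmat (θ : ℝ) : Matrix (Fin 2) (Fin 2) ℝ :=
  !![(2/3) * Real.sin θ ^ 3, (2/3) * Real.cos θ ^ 3;
     -(Real.cos θ * (1 - (2/3) * Real.cos θ ^ 2)), Real.sin θ * (1 - (2/3) * Real.sin θ ^ 2)]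

/-- The set `K` of matrices `M(θ)`, `θ ∈ [0, 2π)`. -/
def Kset : Set (Matrix (Fin 2) (Fin 2) ℝ) :=
  {A | ∃ θ ∈ Set.Ico (0:ℝ) (2 * Real.pi), A = Mmat θ}

/-- The Frobenius norm of a `2 × 2` real matrix. -/
def frob (A : Matrix (Fin 2) (Fin 2) ℝ) : ℝ := Real.sqrt (∑ i, ∑ j, (A i j) ^ 2)

/-- the uniform quartic ellipticity estimate for `K`, and absence of
rank-one connections in `K`. -/
private lemma det_id6 (s1 c1 s2 c2 : ℝ) (h1 : s1^2 + c1^2 = 1) (h2 : s2^2 + c2^2 = 1) :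
    ((2/3)*s1^3 - (2/3)*s2^3) * ((s1*(1-(2/3)*s1^2)) - (s2*(1-(2/3)*s2^2)))
      - ((2/3)*c1^3 - (2/3)*c2^3) * ((-(c1*(1-(2/3)*c1^2))) - (-(c2*(1-(2/3)*c2^2))))
    = (2/9) * (1 - (c1*c2+s1*s2))^2 * ((c1*c2+s1*s2) + 2) := by
  linear_combination ((2/9) + (-2/3)*c1*c2 + (2/3)*c1*c2^3 + (2/9)*c1^2 + (-4/9)*c1^4 + (-2/3)*s1*s2*c2^2 + (2/9)*s1^2 + (4/9)*s1^2*c1^2 + (-4/9)*s1^4) * h1 + ((2/9) + (2/9)*c2^2 + (-4/9)*c2^4 + (2/9)*s2^2 + (4/9)*s2^2*c2^2 + (-4/9)*s2^4 + (-2/3)*s1*s2 + (-2/3)*s1^2*c1*c2 + (2/3)*s1^3*s2) * h2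

private lemma fr_id6 (s1 c1 s2 c2 : ℝ) (h1 : s1^2 + c1^2 = 1) (h2 : s2^2 + c2^2 = 1) :
    ((2/3)*s1^3 - (2/3)*s2^3)^2 + ((2/3)*c1^3 - (2/3)*c2^3)^2
      + ((-(c1*(1-(2/3)*c1^2))) - (-(c2*(1-(2/3)*c2^2))))^2
      + ((s1*(1-(2/3)*s1^2)) - (s2*(1-(2/3)*s2^2)))^2
    = (2/9) * (1 - (c1*c2+s1*s2)) * (2*(c1*c2+s1*s2)^2 + 2*(c1*c2+s1*s2) + 5) := by
  linear_combination ((5/9) + (4/3)*c1*c2 + (-4/3)*c1*c2^3 + (-4/9)*c1^2 + (8/9)*c1^4 + (4/3)*s1*s2*c2^2 + (-4/9)*s1^2 + (-8/9)*s1^2*c1^2 + (8/9)*s1^4) * h1 + ((5/9) + (-4/9)*c2^2 + (8/9)*c2^4 + (-4/9)*s2^2 + (-8/9)*s2^2*c2^2 + (8/9)*s2^4 + (4/3)*s1*s2 + (4/3)*s1^2*c1*c2 + (-4/3)*s1^3*s2) * h2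

private lemma onevar6 (c : ℝ) (h1 : -1 ≤ c) (h2 : c ≤ 1) :
    (1/6) * ((2/9) * (1 - c) * (2*c^2 + 2*c + 5))^2 ≤ (2/9) * (1 - c)^2 * (c + 2) := by
  have hq : (1:ℝ) ≤ 4*c^3 + 12*c^2 + 36*c + 29 := by nlinarith [sq_nonneg (c+1), sq_nonneg c]
  nlinarith [mul_nonneg (mul_nonneg (by linarith : (0:ℝ) ≤ 1-c) (by linarith : (0:ℝ) ≤ 1-c)) (by linarith : (0:ℝ) ≤ 1-c)]

private lemma main_ineq6 (θ η : ℝ) :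
    (1/6) * frob (Mmat θ - Mmat η) ^ 4 ≤ (Mmat θ - Mmat η).det := by
  set s1 := Real.sin θ; set c1 := Real.cos θ
  set s2 := Real.sin η; set c2 := Real.cos η
  have h1 : s1^2 + c1^2 = 1 := Real.sin_sq_add_cos_sq θ
  have h2 : s2^2 + c2^2 = 1 := Real.sin_sq_add_cos_sq η
  have hX : Mmat θ - Mmat η =
      !![(2/3)*s1^3 - (2/3)*s2^3, (2/3)*c1^3 - (2/3)*c2^3;
         (-(c1*(1-(2/3)*c1^2))) - (-(c2*(1-(2/3)*c2^2))),
         (s1*(1-(2/3)*s1^2)) - (s2*(1-(2/3)*s2^2))] := by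
    ext i j
    fin_cases i <;> fin_cases j <;> simp [Mmat, Matrix.sub_apply] <;> rfl
  set c : ℝ := c1*c2 + s1*s2 with hc
  have hc1 : -1 ≤ c := by nlinarith [sq_nonneg (c1+c2), sq_nonneg (s1+s2)]
  have hc2 : c ≤ 1 := by nlinarith [sq_nonneg (c1-c2), sq_nonneg (s1-s2)]
  have hdet : (Mmat θ - Mmat η).det = (2/9) * (1 - c)^2 * (c + 2) := by
    rw [hX, Matrix.det_fin_two_of]
    exact det_id6 s1 c1 s2 c2 h1 h2
  have hS : (∑ i, ∑ j, ((Mmat θ - Mmat η) i j) ^ 2)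
      = (2/9) * (1 - c) * (2*c^2 + 2*c + 5) := by
    rw [hX]
    simp only [Fin.sum_univ_two, Matrix.cons_val', Matrix.cons_val_zero, Matrix.cons_val_one,
      Matrix.head_cons, Matrix.empty_val', Matrix.cons_val_fin_one, Matrix.head_fin_const,
      Matrix.of_apply]
    linear_combination fr_id6 s1 c1 s2 c2 h1 h2
  have hS0 : 0 ≤ ∑ i, ∑ j, ((Mmat θ - Mmat η) i j) ^ 2 :=
    Finset.sum_nonneg fun i _ => Finset.sum_nonneg fun j _ => sq_nonneg _
  have hfr : frob (Mmat θ - Mmat η) ^ 4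
      = ((2/9) * (1 - c) * (2*c^2 + 2*c + 5))^2 := by
    have : frob (Mmat θ - Mmat η) ^ 2 = ∑ i, ∑ j, ((Mmat θ - Mmat η) i j) ^ 2 :=
      Real.sq_sqrt hS0
    calc frob (Mmat θ - Mmat η) ^ 4 = (frob (Mmat θ - Mmat η) ^ 2)^2 := by ring
      _ = ((2/9) * (1 - c) * (2*c^2 + 2*c + 5))^2 := by rw [this, hS]
  rw [hfr, hdet]
  exact onevar6 c hc1 hc2

theorem stmt6 :
    ∃ c₀ : ℝ, 0 < c₀ ∧ ∀ A ∈ Kset, ∀ B ∈ Kset,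
      c₀ * frob (A - B) ^ 4 ≤ (A - B).det ∧ (A ≠ B → (A - B).rank ≠ 1) := by
  refine ⟨1/6, by norm_num, ?_⟩
  rintro A ⟨θ, -, rfl⟩ B ⟨η, -, rfl⟩
  refine ⟨main_ineq6 θ η, fun hne => ?_⟩
  have hX0 : Mmat θ - Mmat η ≠ 0 := sub_ne_zero.mpr hne
  -- some entry is nonzero
  obtain ⟨i, j, hij⟩ : ∃ i j, (Mmat θ - Mmat η) i j ≠ 0 := by
    by_contra h
    push_neg at h
    exact hX0 (by ext i j; simpa using h i j)
  have hS0 : 0 ≤ ∑ i, ∑ j, ((Mmat θ - Mmat η) i j) ^ 2 :=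
    Finset.sum_nonneg fun i _ => Finset.sum_nonneg fun j _ => sq_nonneg _
  have hSpos : 0 < ∑ i, ∑ j, ((Mmat θ - Mmat η) i j) ^ 2 := by
    have hsq : 0 < ((Mmat θ - Mmat η) i j) ^ 2 := by positivity
    have hle1 : ((Mmat θ - Mmat η) i j) ^ 2 ≤ ∑ j, ((Mmat θ - Mmat η) i j) ^ 2 :=
      Finset.single_le_sum (f := fun j => ((Mmat θ - Mmat η) i j) ^ 2) (fun _ _ => sq_nonneg _) (Finset.mem_univ j)
    have hle2 : (∑ j, ((Mmat θ - Mmat η) i j) ^ 2) ≤ ∑ i, ∑ j, ((Mmat θ - Mmat η) i j) ^ 2 :=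
      Finset.single_le_sum (f := fun i => ∑ j, ((Mmat θ - Mmat η) i j) ^ 2) (fun _ _ => Finset.sum_nonneg fun _ _ => sq_nonneg _) (Finset.mem_univ i)
    linarith
  have hfrpos : 0 < frob (Mmat θ - Mmat η) := Real.sqrt_pos.mpr hSpos
  have hdetpos : 0 < (Mmat θ - Mmat η).det :=
    lt_of_lt_of_le (by positivity) (main_ineq6 θ η)
  have hunit : IsUnit (Mmat θ - Mmat η) := by
    rw [Matrix.isUnit_iff_isUnit_det]
    exact isUnit_iff_ne_zero.mpr hdetpos.ne'
  rw [Matrix.rank_of_isUnit _ hunit]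
  simp

end
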